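/- arXiv:1308.0742 — 7 statements merged into one kernel-verified Lean document; each statement's English description precedes it below -/
import Mathlib

section
/- Let M be a metric space such that for all x, y ∈ M and every ε > 0 there exists a continuous path γ : [0,1] → M with γ(0) = x, γ(1) = y which is Lipschitz with constant dist(x,y) + ε (M is an approximate length space). Let A, B ⊆ M be closed subsets with A ∪ B = M. Then for all x ∈ A and y ∈ B one has infDist(x, A ∩ B) + infDist(y, A ∩ B) ≤ dist(x, y). -/
/-- In an approximate length space `M` decomposed as `M = A ∪ B` into closed
subsets, points `x ∈ A`, `y ∈ B` satisfy
`infDist x (A ∩ B) + infDist y (A ∩ B) ≤ dist x y`. -/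
theorem stmt1 {M : Type*} [MetricSpace M]
    (hlen : ∀ x y : M, ∀ ε : ℝ, 0 < ε → ∃ γ : ℝ → M,
      ContinuousOn γ (Set.Icc 0 1) ∧ γ 0 = x ∧ γ 1 = y ∧
      ∀ s ∈ Set.Icc (0:ℝ) 1, ∀ t ∈ Set.Icc (0:ℝ) 1,
        dist (γ s) (γ t) ≤ (dist x y + ε) * |s - t|)
    (A B : Set M) (hA : IsClosed A) (hB : IsClosed B) (hAB : A ∪ B = Set.univ) :
    ∀ x ∈ A, ∀ y ∈ B,
      Metric.infDist x (A ∩ B) + Metric.infDist y (A ∩ B) ≤ dist x y := by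
  intro x hx y hy
  refine le_of_forall_pos_le_add ?_
  intro ε hε
  obtain ⟨γ, hcont, h0, h1, hlip⟩ := hlen x y ε hε
  -- set of times in A
  set S : Set ℝ := Set.Icc 0 1 ∩ γ ⁻¹' A with hS
  have hSclosed : IsClosed S := hcont.preimage_isClosed_of_isClosed isClosed_Icc hA
  have h0S : (0 : ℝ) ∈ S := ⟨⟨le_refl 0, zero_le_one⟩, by simp [h0, hx]⟩
  have hSne : S.Nonempty := ⟨0, h0S⟩
  have hSbdd : BddAbove S := ⟨1, fun t ht => ht.1.2⟩
  set c := sSup S with hc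
  have hcS : c ∈ S := hSclosed.csSup_mem hSne hSbdd
  have hcIcc : c ∈ Set.Icc (0:ℝ) 1 := hcS.1
  have hcA : γ c ∈ A := hcS.2
  have hcB : γ c ∈ B := by
    rcases eq_or_lt_of_le hcIcc.2 with hc1 | hc1
    · rw [hc1, h1]; exact hy
    · -- points just right of c are in B
      have hmem : ∀ t ∈ Set.Ioc c 1, γ t ∈ B := by
        intro t ht
        have htIcc : t ∈ Set.Icc (0:ℝ) 1 := ⟨le_trans hcIcc.1 ht.1.le, ht.2⟩
        have : γ t ∉ A := by
          intro hA'
          exact absurd (le_csSup hSbdd ⟨htIcc, hA'⟩) (not_le.mpr ht.1)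
        have : γ t ∈ A ∪ B := hAB ▸ Set.mem_univ _
        rcases this with h|h
        · exact absurd h ‹_›
        · exact h
      have htend : Filter.Tendsto γ (nhdsWithin c (Set.Ioc c 1)) (nhds (γ c)) :=
        (hcont c hcIcc).mono (fun t ht => ⟨le_trans hcIcc.1 ht.1.le, ht.2⟩)
      have hne : (nhdsWithin c (Set.Ioc c 1)).NeBot := left_nhdsWithin_Ioc_neBot hc1
      exact hB.mem_of_tendsto htend
        (Filter.eventually_iff_exists_mem.mpr ⟨Set.Ioc c 1, self_mem_nhdsWithin, hmem⟩)
  have hz : γ c ∈ A ∩ B := ⟨hcA, hcB⟩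
  have h0' : (0:ℝ) ∈ Set.Icc (0:ℝ) 1 := ⟨le_refl 0, zero_le_one⟩
  have h1' : (1:ℝ) ∈ Set.Icc (0:ℝ) 1 := ⟨zero_le_one, le_refl 1⟩
  have hxz : Metric.infDist x (A ∩ B) ≤ (dist x y + ε) * c := by
    calc Metric.infDist x (A ∩ B) ≤ dist x (γ c) := Metric.infDist_le_dist_of_mem hz
    _ = dist (γ 0) (γ c) := by rw [h0]
    _ ≤ (dist x y + ε) * |0 - c| := hlip 0 h0' c hcIcc
    _ = (dist x y + ε) * c := by rw [abs_of_nonpos (by linarith [hcIcc.1])]; ring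
  have hyz : Metric.infDist y (A ∩ B) ≤ (dist x y + ε) * (1 - c) := by
    calc Metric.infDist y (A ∩ B) ≤ dist y (γ c) := Metric.infDist_le_dist_of_mem hz
    _ = dist (γ 1) (γ c) := by rw [h1]
    _ ≤ (dist x y + ε) * |1 - c| := hlip 1 h1' c hcIcc
    _ = (dist x y + ε) * (1 - c) := by rw [abs_of_nonneg (by linarith [hcIcc.2])]
  linarith
end

section
/- Let M be a metric space, let M_1, …, M_q be nonempty subsets of M and let N be a nonempty bounded subset such that M_1, …, M_q are coarsely transversal with respect to N: for every r > 0 there is s > 0 with ⋂_k U_r(M_k) ⊆ U_s(N). Let f : M → EuclideanSpace ℝ (Fin q) be a map satisfying |f(x)_k| = infDist(x, M_k) for all x ∈ M and all k. Then the preimage under f of every bounded subset of EuclideanSpace ℝ (Fin q) is bounded. -/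
/-- If the subsets `M_k` are coarsely transversal with respect to a nonempty
bounded set `N`, then any map `f : M → ℝ^q` whose coordinates have absolute
value the distance to `M_k` pulls back bounded sets to bounded sets. -/
theorem stmt4 {M : Type*} [MetricSpace M] (q : ℕ)
    (Msets : Fin q → Set M) (hMne : ∀ k, (Msets k).Nonempty)
    (N : Set M) (hNne : N.Nonempty) (hNb : Bornology.IsBounded N)
    (hct : ∀ r : ℝ, 0 < r → ∃ s : ℝ, 0 < s ∧
      (⋂ k, Metric.cthickening r (Msets k)) ⊆ Metric.cthickening s N)
    (f : M → EuclideanSpace ℝ (Fin q))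
    (hf : ∀ x k, |f x k| = Metric.infDist x (Msets k)) :
    ∀ K : Set (EuclideanSpace ℝ (Fin q)), Bornology.IsBounded K →
      Bornology.IsBounded (f ⁻¹' K) := by
  intro K hK
  obtain ⟨C, hC⟩ := hK.subset_ball 0
  have hr : (0:ℝ) < max C 1 := lt_max_of_lt_right one_pos
  obtain ⟨s, hs, hsub⟩ := hct (max C 1) hr
  have hsubset : f ⁻¹' K ⊆ Metric.cthickening s N := by
    intro x hx
    apply hsub
    refine Set.mem_iInter.2 fun k => ?_
    rw [Metric.mem_cthickening_iff,
      ENNReal.le_ofReal_iff_toReal_le (Metric.infEdist_ne_top (hMne k)) hr.le]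
    rw [show (Metric.infEDist x (Msets k)).toReal = Metric.infDist x (Msets k) from rfl,
      ← hf x k]
    calc |f x k| ≤ ‖f x k‖ := le_of_eq (Real.norm_eq_abs _).symm
      _ ≤ ‖f x‖ := by
          rw [EuclideanSpace.norm_eq, ← Real.sqrt_sq (norm_nonneg (f x k))]
          have := Finset.single_le_sum (f := fun i => ‖f x i‖ ^ 2)
            (fun i _ => sq_nonneg _) (Finset.mem_univ k)
          exact Real.sqrt_le_sqrt this
      _ ≤ C := (mem_ball_zero_iff.1 (hC hx)).le
      _ ≤ max C 1 := le_max_left _ _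
  exact (hNb.cthickening).subset hsubset
end

section
/- Let M be a proper metric space (closed bounded sets are compact) which is an approximate length space: for all x, y ∈ M and ε > 0 there is a continuous path γ : [0,1] → M with γ(0) = x, γ(1) = y which is Lipschitz with constant dist(x,y) + ε. For each k ∈ Fin q let M_k⁺ and M_k⁻ be closed subsets with M_k⁺ ∪ M_k⁻ = M, set M_k := M_k⁺ ∩ M_k⁻ and N := ⋂_k M_k, and assume that N is nonempty and compact and that the M_k are coarsely transversal: for every r > 0 there is s > 0 with ⋂_k U_r(M_k) ⊆ U_s(N). Define h_k(x) = infDist(x, M_k) if x ∈ M_k⁺ and h_k(x) = −infDist(x, M_k) otherwise, and f : M → EuclideanSpace ℝ (Fin q), f(x) = (h_0(x), …, h_{q−1}(x)). Then f is Lipschitz with constant √q and f is a proper map, i.e. the preimage under f of every compact subset of EuclideanSpace ℝ (Fin q) is compact. -/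
open Metric in
private lemma crossing_aux {M : Type*} [MetricSpace M] {Mp Mm : Set M} (hMp : IsClosed Mp)
    (hMm : IsClosed Mm) (hcover : Mp ∪ Mm = Set.univ) {x y : M}
    (hlen : ∀ ε : ℝ, 0 < ε → ∃ γ : ℝ → M,
      ContinuousOn γ (Set.Icc 0 1) ∧ γ 0 = x ∧ γ 1 = y ∧
      ∀ s ∈ Set.Icc (0:ℝ) 1, ∀ t ∈ Set.Icc (0:ℝ) 1,
        dist (γ s) (γ t) ≤ (dist x y + ε) * |s - t|)
    (hx : x ∈ Mp) (hy : y ∉ Mp) :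
    infDist x (Mp ∩ Mm) + infDist y (Mp ∩ Mm) ≤ dist x y := by
  have key : ∀ ε : ℝ, 0 < ε →
      infDist x (Mp ∩ Mm) + infDist y (Mp ∩ Mm) ≤ dist x y + ε := by
    intro ε hε
    obtain ⟨γ, hγc, hγ0, hγ1, hγl⟩ := hlen ε hε
    set S : Set ℝ := Set.Icc 0 1 ∩ γ ⁻¹' Mp with hS
    have hS0 : (0:ℝ) ∈ S := ⟨⟨le_refl 0, zero_le_one⟩, by simpa [hγ0] using hx⟩
    have hSb : BddAbove S := ⟨1, fun t ht => ht.1.2⟩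
    have hScl : IsClosed S := hγc.preimage_isClosed_of_isClosed isClosed_Icc hMp
    set t0 : ℝ := sSup S with ht0
    have ht0S : t0 ∈ S := hScl.csSup_mem ⟨0, hS0⟩ hSb
    have ht00 : 0 ≤ t0 := le_csSup hSb hS0
    have ht01 : t0 ≤ 1 := ht0S.1.2
    have hMp' : γ t0 ∈ Mp := ht0S.2
    have hMm' : γ t0 ∈ Mm := by
      rcases eq_or_lt_of_le ht01 with h1 | h1
      · exact absurd (by rw [← hγ1, ← h1]; exact hMp') hy
      · have hIoc : ∀ t ∈ Set.Ioc t0 1, γ t ∈ Mm := by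
          intro t ht
          have htMp : γ t ∉ Mp := by
            intro hmem
            have : t ∈ S := ⟨⟨le_trans ht00 ht.1.le, ht.2⟩, hmem⟩
            exact absurd (le_csSup hSb this) (not_le.mpr ht.1)
          have := hcover ▸ Set.mem_univ (γ t)
          rcases (Set.mem_union _ _ _).mp (hcover ▸ Set.mem_univ (γ t)) with h | h
          · exact absurd h htMp
          · exact h
        have hsub : Set.Ioc t0 1 ⊆ Set.Icc 0 1 :=
          fun t ht => ⟨le_trans ht00 ht.1.le, ht.2⟩
        have htend : Filter.Tendsto γ (nhdsWithin t0 (Set.Ioc t0 1)) (nhds (γ t0)) :=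
          (hγc t0 ⟨ht00, ht01⟩).mono hsub
        have heq : nhdsWithin t0 (Set.Ioc t0 1) = nhdsWithin t0 (Set.Ioi t0) :=
          nhdsWithin_Ioc_eq_nhdsGT h1
        haveI : (nhdsWithin t0 (Set.Ioc t0 1)).NeBot := by
          rw [heq]; infer_instance
        exact hMm.mem_of_tendsto htend
          (eventually_mem_nhdsWithin.mono fun t ht => hIoc t ht)
    have h1 : infDist x (Mp ∩ Mm) ≤ (dist x y + ε) * t0 := by
      calc infDist x (Mp ∩ Mm) ≤ dist x (γ t0) :=
            infDist_le_dist_of_mem ⟨hMp', hMm'⟩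
        _ = dist (γ 0) (γ t0) := by rw [hγ0]
        _ ≤ (dist x y + ε) * |0 - t0| :=
            hγl 0 ⟨le_refl 0, zero_le_one⟩ t0 ⟨ht00, ht01⟩
        _ = (dist x y + ε) * t0 := by rw [abs_of_nonpos (by linarith)]; ring
    have h2 : infDist y (Mp ∩ Mm) ≤ (dist x y + ε) * (1 - t0) := by
      calc infDist y (Mp ∩ Mm) ≤ dist y (γ t0) :=
            infDist_le_dist_of_mem ⟨hMp', hMm'⟩
        _ = dist (γ 1) (γ t0) := by rw [hγ1]
        _ ≤ (dist x y + ε) * |1 - t0| :=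
            hγl 1 ⟨zero_le_one, le_refl 1⟩ t0 ⟨ht00, ht01⟩
        _ = (dist x y + ε) * (1 - t0) := by rw [abs_of_nonneg (by linarith)]
    have : (dist x y + ε) * t0 + (dist x y + ε) * (1 - t0) = dist x y + ε := by ring
    linarith
  by_contra hc
  push_neg at hc
  have := key ((infDist x (Mp ∩ Mm) + infDist y (Mp ∩ Mm) - dist x y) / 2) (by linarith)
  linarith

open Classical in
/-- Lemma 1.2: on a proper approximate length space multi-partitioned by
closed decompositions `M = M_k⁺ ∪ M_k⁻` with compact, coarsely transversal
intersection `N`, the tuple `f` of signed distance functions is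
`√q`-Lipschitz and proper. -/
theorem stmt5 {M : Type*} [MetricSpace M] [ProperSpace M] (q : ℕ)
    (hlen : ∀ x y : M, ∀ ε : ℝ, 0 < ε → ∃ γ : ℝ → M,
      ContinuousOn γ (Set.Icc 0 1) ∧ γ 0 = x ∧ γ 1 = y ∧
      ∀ s ∈ Set.Icc (0:ℝ) 1, ∀ t ∈ Set.Icc (0:ℝ) 1,
        dist (γ s) (γ t) ≤ (dist x y + ε) * |s - t|)
    (Mp Mm : Fin q → Set M)
    (hMp : ∀ k, IsClosed (Mp k)) (hMm : ∀ k, IsClosed (Mm k))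
    (hcover : ∀ k, Mp k ∪ Mm k = Set.univ)
    (N : Set M) (hN : N = ⋂ k, Mp k ∩ Mm k)
    (hNne : N.Nonempty) (hNc : IsCompact N)
    (hct : ∀ r : ℝ, 0 < r → ∃ s : ℝ, 0 < s ∧
      (⋂ k, Metric.cthickening r (Mp k ∩ Mm k)) ⊆ Metric.cthickening s N)
    (h : Fin q → M → ℝ)
    (hdef : ∀ k x, h k x = if x ∈ Mp k then Metric.infDist x (Mp k ∩ Mm k)
      else -Metric.infDist x (Mp k ∩ Mm k))
    (f : M → EuclideanSpace ℝ (Fin q)) (hf : ∀ x k, f x k = h k x) :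
    LipschitzWith (NNReal.sqrt q) f ∧
    ∀ K : Set (EuclideanSpace ℝ (Fin q)), IsCompact K → IsCompact (f ⁻¹' K) := by
  -- each coordinate function is 1-Lipschitz
  have hcoord : ∀ k x y, h k x - h k y ≤ dist x y := by
    intro k x y
    rw [hdef k x, hdef k y]
    by_cases hx : x ∈ Mp k <;> by_cases hy : y ∈ Mp k <;> simp only [hx, hy, if_true, if_false]
    · have := Metric.infDist_le_infDist_add_dist
        (x := x) (y := y) (s := Mp k ∩ Mm k)
      linarith [this]
    · have := crossing_aux (hMp k) (hMm k) (hcover k) (hlen x y) hx hy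
      linarith
    · have hx' : 0 ≤ Metric.infDist x (Mp k ∩ Mm k) := Metric.infDist_nonneg
      have hy' : 0 ≤ Metric.infDist y (Mp k ∩ Mm k) := Metric.infDist_nonneg
      linarith [dist_nonneg (x := x) (y := y)]
    · have := Metric.infDist_le_infDist_add_dist
        (x := y) (y := x) (s := Mp k ∩ Mm k)
      rw [dist_comm] at this
      linarith
  have hlip1 : ∀ k x y, |h k x - h k y| ≤ dist x y := by
    intro k x y
    rw [abs_sub_le_iff]
    exact ⟨hcoord k x y, by rw [dist_comm]; exact hcoord k y x⟩
  have hflip : LipschitzWith (NNReal.sqrt q) f := by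
    apply LipschitzWith.of_dist_le_mul
    intro x y
    rw [EuclideanSpace.dist_eq]
    have hsum : ∑ k, dist (f x k) (f y k) ^ 2 ≤ (q : ℝ) * dist x y ^ 2 := by
      calc ∑ k, dist (f x k) (f y k) ^ 2 ≤ ∑ _k : Fin q, dist x y ^ 2 := by
            apply Finset.sum_le_sum
            intro k _
            have : dist (f x k) (f y k) ≤ dist x y := by
              rw [hf x k, hf y k, Real.dist_eq]
              exact hlip1 k x y
            exact pow_le_pow_left₀ dist_nonneg this 2
        _ = (q : ℝ) * dist x y ^ 2 := by
            simp [Finset.sum_const, Finset.card_univ]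
    calc Real.sqrt (∑ k, dist (f x k) (f y k) ^ 2)
        ≤ Real.sqrt ((q : ℝ) * dist x y ^ 2) := Real.sqrt_le_sqrt hsum
      _ = Real.sqrt q * dist x y := by
          rw [Real.sqrt_mul (Nat.cast_nonneg q), Real.sqrt_sq dist_nonneg]
      _ = (NNReal.sqrt q : ℝ) * dist x y := by
          rw [Real.coe_sqrt]; push_cast; ring
  refine ⟨hflip, ?_⟩
  intro K hK
  have hfc : Continuous f := hflip.continuous
  have hcl : IsClosed (f ⁻¹' K) := hK.isClosed.preimage hfc
  obtain ⟨r, hr⟩ := hK.isBounded.subset_closedBall 0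
  set R : ℝ := max r 1 with hRdef
  have hR : 0 < R := lt_of_lt_of_le one_pos (le_max_right r 1)
  obtain ⟨s, hs, hsub⟩ := hct R hR
  have hMkne : ∀ k, (Mp k ∩ Mm k).Nonempty := by
    intro k
    obtain ⟨z, hz⟩ := hNne
    rw [hN] at hz
    exact ⟨z, Set.mem_iInter.mp hz k⟩
  have hsub2 : f ⁻¹' K ⊆ Metric.cthickening s N := by
    intro x hx
    apply hsub
    rw [Set.mem_iInter]
    intro k
    have hxK : f x ∈ Metric.closedBall 0 R :=
      Metric.closedBall_subset_closedBall (le_max_left r 1) (hr hx)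
    have hnorm : ‖f x‖ ≤ R := by
      rwa [Metric.mem_closedBall, dist_zero_right] at hxK
    have hck : |f x k| ≤ R := by
      have h1 : ‖f x k‖ ^ 2 ≤ ∑ i, ‖f x i‖ ^ 2 :=
        Finset.single_le_sum (fun i _ => sq_nonneg ‖f x i‖) (Finset.mem_univ k)
      have h2 : |f x k| ≤ ‖f x‖ := by
        rw [EuclideanSpace.norm_eq]
        calc |f x k| = Real.sqrt (‖f x k‖ ^ 2) := by
              rw [Real.sqrt_sq_eq_abs]; simp [Real.norm_eq_abs]
          _ ≤ Real.sqrt (∑ i, ‖f x i‖ ^ 2) := Real.sqrt_le_sqrt h1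
      linarith
    have hinf : Metric.infDist x (Mp k ∩ Mm k) ≤ R := by
      rw [hf x k, hdef k x] at hck
      by_cases hxk : x ∈ Mp k
      · simpa [hxk, abs_of_nonneg Metric.infDist_nonneg] using hck
      · simp only [hxk, if_false, abs_neg, abs_of_nonneg Metric.infDist_nonneg] at hck
        exact hck
    obtain ⟨z, hz, hzd⟩ :=
      ((hMp k).inter (hMm k)).exists_infDist_eq_dist (hMkne k) x
    exact Metric.mem_cthickening_of_dist_le x z R _ hz (by rw [← hzd]; exact hinf)
  exact (hNc.cthickening).of_isClosed_subset hcl hsub2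
end

section
/- Let q ≥ 2 and r > 0, and work in EuclideanSpace ℝ (Fin q). Define A := {x : x_0 ≤ 0 and ‖x‖ ≥ r} and B := {x : x_0 ≥ 0 and ‖x‖ ≥ r}, so that A ∪ B = ℝ^q ∖ B_r(0) and A ∩ B = {x : x_0 = 0 and ‖x‖ ≥ r}. Then for every t > 0 there exists s > 0 (indeed s = 3t works) such that U_t(A) ∩ U_t(B) ⊆ U_s(A ∩ B). In particular this decomposition of the complement of the open ball of radius r is coarsely excisive. -/
open Metric EMetric Set

private lemma coord_abs_le_dist {q : ℕ} (i : Fin q) (x y : EuclideanSpace ℝ (Fin q)) :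
    |x i - y i| ≤ dist x y := by
  rw [EuclideanSpace.dist_eq, ← Real.sqrt_sq_eq_abs]
  apply Real.sqrt_le_sqrt
  have := Finset.single_le_sum (f := fun j => dist (x j) (y j) ^ 2)
    (fun j _ => sq_nonneg _) (Finset.mem_univ i)
  simpa [Real.dist_eq, sq_abs] using this

private lemma key_approx {q : ℕ} (hq : 1 < q) (r : ℝ) (hr : 0 < r)
    (x : EuclideanSpace ℝ (Fin q)) (d : ℝ) (hd : 0 < d)
    (h0 : |x ⟨0, by omega⟩| ≤ d) (hn : r - d ≤ ‖x‖) :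
    ∃ y : EuclideanSpace ℝ (Fin q), y ⟨0, by omega⟩ = 0 ∧ r ≤ ‖y‖ ∧ dist x y ≤ 3 * d := by
  set i0 : Fin q := ⟨0, by omega⟩
  set i1 : Fin q := ⟨1, by omega⟩
  set x' : EuclideanSpace ℝ (Fin q) := x - (x i0) • EuclideanSpace.single i0 (1 : ℝ) with hx'
  have hx'0 : x' i0 = 0 := by
    simp [hx', EuclideanSpace.single_apply]
  have hdxx' : dist x x' = |x i0| := by
    rw [dist_eq_norm]
    have : x - x' = (x i0) • EuclideanSpace.single i0 (1 : ℝ) := by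
      simp [hx']
    rw [this, norm_smul, EuclideanSpace.norm_single]
    simp [Real.norm_eq_abs]
  have hnx' : ‖x‖ - |x i0| ≤ ‖x'‖ := by
    have h : ‖x‖ - ‖x'‖ ≤ dist x x' := by
      rw [dist_eq_norm]; exact norm_sub_norm_le x x'
    linarith [hdxx' ▸ h]
  by_cases hge : r ≤ ‖x'‖
  · exact ⟨x', hx'0, hge, by rw [hdxx']; linarith⟩
  · push_neg at hge
    by_cases hz : x' = 0
    · -- then ‖x‖ ≤ |x i0| ≤ d, so r ≤ 2d
      have hxn : ‖x‖ ≤ |x i0| := by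
        have : ‖x'‖ = 0 := by simp [hz]
        linarith [hnx', this ▸ hnx']
      have hr2d : r ≤ 2 * d := by linarith
      refine ⟨EuclideanSpace.single i1 r, ?_, ?_, ?_⟩
      · rw [EuclideanSpace.single_apply]
        have : i0 ≠ i1 := by simp [i0, i1, Fin.ext_iff]
        rw [if_neg this]
      · rw [EuclideanSpace.norm_single]
        simp [abs_of_pos hr]
      · calc dist x (EuclideanSpace.single i1 r)
            ≤ dist x 0 + dist (0 : EuclideanSpace ℝ (Fin q)) (EuclideanSpace.single i1 r) :=
              dist_triangle _ _ _
          _ ≤ d + r := by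
              rw [dist_zero_right, dist_comm, dist_zero_right, EuclideanSpace.norm_single]
              have : ‖x‖ ≤ d := le_trans hxn h0
              simp only [Real.norm_eq_abs, abs_of_pos hr]
              linarith
          _ ≤ 3 * d := by linarith
    · have hx'pos : 0 < ‖x'‖ := norm_pos_iff.mpr hz
      refine ⟨(r / ‖x'‖) • x', ?_, ?_, ?_⟩
      · simp [hx'0]
      · rw [norm_smul, Real.norm_eq_abs, abs_of_pos (div_pos hr hx'pos),
          div_mul_cancel₀ _ (ne_of_gt hx'pos)]
      · have hdx'y : dist x' ((r / ‖x'‖) • x') = r - ‖x'‖ := by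
          rw [dist_eq_norm]
          have : x' - (r / ‖x'‖) • x' = (1 - r / ‖x'‖) • x' := by
            rw [sub_smul, one_smul]
          rw [this, norm_smul, Real.norm_eq_abs]
          have h1 : 1 - r / ‖x'‖ < 0 := by
            rw [sub_neg]
            exact (one_lt_div hx'pos).mpr hge
          rw [abs_of_neg h1]
          field_simp
          ring
        have hx'ge : r - 2 * d ≤ ‖x'‖ := by linarith
        calc dist x ((r / ‖x'‖) • x')
            ≤ dist x x' + dist x' ((r / ‖x'‖) • x') := dist_triangle _ _ _
          _ = |x i0| + (r - ‖x'‖) := by rw [hdxx', hdx'y]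
          _ ≤ d + 2 * d := by linarith
          _ = 3 * d := by ring

/-- For `q ≥ 2` and `r > 0`, the decomposition of `ℝ^q ∖ B_r(0)` into the two
pieces `A = {x₀ ≤ 0, ‖x‖ ≥ r}` and `B = {x₀ ≥ 0, ‖x‖ ≥ r}` is coarsely
excisive; indeed `U_t(A) ∩ U_t(B) ⊆ U_{3t}(A ∩ B)` for every `t > 0`. -/
theorem stmt9 (q : ℕ) (hq : 2 ≤ q) (r : ℝ) (hr : 0 < r)
    (A B : Set (EuclideanSpace ℝ (Fin q)))
    (hA : A = {x : EuclideanSpace ℝ (Fin q) | x ⟨0, by omega⟩ ≤ 0 ∧ r ≤ ‖x‖})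
    (hB : B = {x : EuclideanSpace ℝ (Fin q) | 0 ≤ x ⟨0, by omega⟩ ∧ r ≤ ‖x‖}) :
    A ∪ B = (Metric.ball (0 : EuclideanSpace ℝ (Fin q)) r)ᶜ ∧
    A ∩ B = {x : EuclideanSpace ℝ (Fin q) | x ⟨0, by omega⟩ = 0 ∧ r ≤ ‖x‖} ∧
    ∀ t : ℝ, 0 < t →
      Metric.cthickening t A ∩ Metric.cthickening t B ⊆
        Metric.cthickening (3 * t) (A ∩ B) := by
  subst hA hB
  refine ⟨?_, ?_, ?_⟩
  · ext x
    simp only [Set.mem_union, Set.mem_setOf_eq, Set.mem_compl_iff, Metric.mem_ball,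
      dist_zero_right, not_lt]
    constructor
    · rintro (⟨_, h⟩ | ⟨_, h⟩) <;> exact h
    · intro h
      rcases le_total (x ⟨0, by omega⟩) 0 with h0 | h0
      · exact Or.inl ⟨h0, h⟩
      · exact Or.inr ⟨h0, h⟩
  · ext x
    simp only [Set.mem_inter_iff, Set.mem_setOf_eq]
    constructor
    · rintro ⟨⟨h1, h⟩, ⟨h2, _⟩⟩
      exact ⟨le_antisymm h1 h2, h⟩
    · rintro ⟨h0, h⟩
      exact ⟨⟨le_of_eq h0, h⟩, ⟨ge_of_eq h0, h⟩⟩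
  · intro t ht x hx
    obtain ⟨hxA, hxB⟩ := hx
    rw [Metric.mem_cthickening_iff] at hxA hxB ⊢
    refine ENNReal.le_of_forall_pos_le_add fun ε hε _ => ?_
    have hε3 : (0 : ℝ) < (ε : ℝ) / 3 := by positivity
    obtain ⟨d, hd⟩ : ∃ d : ℝ, d = t + (ε : ℝ) / 3 := ⟨_, rfl⟩
    have hdpos : 0 < d := by rw [hd]; positivity
    have hAlt : EMetric.infEdist x {x : EuclideanSpace ℝ (Fin q) | x ⟨0, by omega⟩ ≤ 0 ∧ r ≤ ‖x‖}
        < ENNReal.ofReal d := lt_of_le_of_lt hxA (by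
          rw [ENNReal.ofReal_lt_ofReal_iff hdpos, hd]; linarith)
    have hBlt : EMetric.infEdist x {x : EuclideanSpace ℝ (Fin q) | 0 ≤ x ⟨0, by omega⟩ ∧ r ≤ ‖x‖}
        < ENNReal.ofReal d := lt_of_le_of_lt hxB (by
          rw [ENNReal.ofReal_lt_ofReal_iff hdpos, hd]; linarith)
    obtain ⟨a, ⟨ha0, har⟩, hda⟩ := EMetric.infEdist_lt_iff.mp hAlt
    obtain ⟨b, ⟨hb0, _⟩, hdb⟩ := EMetric.infEdist_lt_iff.mp hBlt
    rw [edist_lt_ofReal] at hda hdb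
    -- coordinate bound
    have hca := coord_abs_le_dist ⟨0, by omega⟩ x a
    have hcb := coord_abs_le_dist ⟨0, by omega⟩ x b
    have h0 : |x ⟨0, by omega⟩| ≤ d := by
      rw [abs_le]
      constructor
      · have := neg_abs_le (x ⟨0, by omega⟩ - b ⟨0, by omega⟩)
        have h1 : -(dist x b) ≤ x ⟨0, by omega⟩ - b ⟨0, by omega⟩ := by
          have := (abs_le.mp hcb).1; linarith
        linarith
      · have h1 : x ⟨0, by omega⟩ - a ⟨0, by omega⟩ ≤ dist x a := (abs_le.mp hca).2
        linarith
    have hn : r - d ≤ ‖x‖ := by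
      have := norm_sub_norm_le a x
      rw [← dist_eq_norm, dist_comm] at this
      linarith
    obtain ⟨y, hy0, hyr, hdy⟩ := key_approx (by omega) r hr x d hdpos h0 hn
    have hymem : y ∈ {x : EuclideanSpace ℝ (Fin q) | x ⟨0, by omega⟩ ≤ 0 ∧ r ≤ ‖x‖} ∩
        {x : EuclideanSpace ℝ (Fin q) | 0 ≤ x ⟨0, by omega⟩ ∧ r ≤ ‖x‖} :=
      ⟨⟨le_of_eq hy0, hyr⟩, ⟨ge_of_eq hy0, hyr⟩⟩
    calc EMetric.infEdist x _ ≤ edist x y := EMetric.infEdist_le_edist_of_mem hymem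
      _ ≤ ENNReal.ofReal (3 * d) := by
          rw [edist_dist]
          exact ENNReal.ofReal_le_ofReal hdy
      _ ≤ ENNReal.ofReal (3 * t) + ε := by
          have : (3 : ℝ) * d = 3 * t + (ε : ℝ) := by rw [hd]; ring
          rw [this, ENNReal.ofReal_add (by positivity) (by positivity)]
          simp
end

section
/- Let M and Y be metric spaces equipped with Borel measures μ and ν, let f : M → Y be continuous, and let R ≥ 0. Let V : L²(M,μ;ℂ) → L²(Y,ν;ℂ) be a continuous linear map which covers f with propagation R: for every s ∈ L²(μ) and every closed set C ⊆ M such that s = 0 μ-a.e. outside C, one has Vs = 0 ν-a.e. outside U_R(f(C)). Then the Hilbert space adjoint V* : L²(ν) → L²(μ) satisfies: for every u ∈ L²(ν) and every closed set D ⊆ Y such that u = 0 ν-a.e. outside D, one has V*u = 0 μ-a.e. outside f⁻¹(U_R(D)). -/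
open MeasureTheory Metric in
/-- If `V : L²(μ) → L²(ν)` covers the continuous map `f : M → Y` with
propagation `R` (sections supported in a closed set `C` are mapped to sections
supported in the closed `R`-neighborhood of `f(C)`), then the adjoint `V*`
maps sections supported in a closed set `D ⊆ Y` to sections supported in
`f⁻¹(U_R(D))`. -/
theorem stmt13 {M Y : Type*} [MetricSpace M] [MetricSpace Y]
    [MeasurableSpace M] [BorelSpace M] [MeasurableSpace Y] [BorelSpace Y]
    (μ : Measure M) (ν : Measure Y) (f : M → Y) (hf : Continuous f)
    (R : ℝ) (hR : 0 ≤ R)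
    (V : Lp ℂ 2 μ →L[ℂ] Lp ℂ 2 ν)
    (hV : ∀ (s : Lp ℂ 2 μ) (C : Set M), IsClosed C →
      (∀ᵐ p ∂μ, p ∉ C → s p = 0) →
      (∀ᵐ y ∂ν, y ∉ cthickening R (f '' C) → V s y = 0))
    (u : Lp ℂ 2 ν) (D : Set Y) (hD : IsClosed D)
    (hu : ∀ᵐ y ∂ν, y ∉ D → u y = 0) :
    ∀ᵐ p ∂μ, p ∉ f ⁻¹' (cthickening R D) →
      (ContinuousLinearMap.adjoint V) u p = 0 := by
  set w : Lp ℂ 2 μ := (ContinuousLinearMap.adjoint V) u with hw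
  -- key step: for each ε > 0, w vanishes a.e. on the closed set
  -- C_ε = {p | ofReal (R+ε) ≤ infEdist (f p) D}
  have key : ∀ ε : ℝ, 0 < ε →
      ∀ᵐ p ∂μ, ENNReal.ofReal (R + ε) ≤ EMetric.infEdist (f p) D → w p = 0 := by
    intro ε hε
    set C : Set M := {p | ENNReal.ofReal (R + ε) ≤ EMetric.infEdist (f p) D} with hC
    have hCclosed : IsClosed C := by
      have : C = (fun p => EMetric.infEdist (f p) D) ⁻¹' Set.Ici (ENNReal.ofReal (R + ε)) := rfl
      rw [this]
      exact IsClosed.preimage (EMetric.continuous_infEdist.comp hf) isClosed_Ici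
    -- s = indicator of C times w
    have hgmem : MemLp (C.indicator (w : M → ℂ)) 2 μ :=
      (Lp.memLp w).indicator hCclosed.measurableSet
    set s : Lp ℂ 2 μ := hgmem.toLp _ with hs
    have hscoe : (s : M → ℂ) =ᵐ[μ] C.indicator (w : M → ℂ) := hgmem.coeFn_toLp
    have hs0 : ∀ᵐ p ∂μ, p ∉ C → s p = 0 := by
      filter_upwards [hscoe] with p hp hpC
      rw [hp, Set.indicator_of_notMem hpC]
    have hVs := hV s C hCclosed hs0
    -- D is disjoint from cthickening R (f '' C)
    have hdisj : ∀ y ∈ D, y ∉ cthickening R (f '' C) := by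
      intro y hy hmem
      rw [mem_cthickening_iff] at hmem
      have hge : ENNReal.ofReal (R + ε) ≤ EMetric.infEdist y (f '' C) := by
        rw [EMetric.infEdist, Metric.le_infEDist]
        rintro z ⟨p, hpC, rfl⟩
        calc ENNReal.ofReal (R + ε) ≤ EMetric.infEdist (f p) D := hpC
          _ ≤ edist (f p) y + EMetric.infEdist y D :=
            EMetric.infEdist_le_infEdist_add_edist.trans (by rw [add_comm, edist_comm, EMetric.infEdist])
          _ = edist (f p) y := by rw [EMetric.infEdist, Metric.infEDist_zero_of_mem hy, add_zero]
          _ = edist y (f p) := edist_comm _ _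
      have : ENNReal.ofReal (R + ε) ≤ ENNReal.ofReal R := hge.trans hmem
      rw [ENNReal.ofReal_le_ofReal_iff hR] at this
      linarith
    -- ⟪V s, u⟫ = 0
    have hinner : (inner ℂ (V s) u : ℂ) = 0 := by
      rw [MeasureTheory.L2.inner_def]
      apply integral_eq_zero_of_ae
      filter_upwards [hVs, hu] with y h1 h2
      by_cases hyD : y ∈ D
      · rw [h1 (hdisj y hyD)]; simp
      · rw [h2 hyD]; simp
    -- hence ⟪s, w⟫ = 0
    have hsw : (inner ℂ s w : ℂ) = 0 := by
      rw [hw, ContinuousLinearMap.adjoint_inner_right, hinner]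
    -- compute ⟪s, w⟫ as an integral of nonneg function
    have hptwise : (fun p => (inner ℂ (s p) (w p) : ℂ)) =ᵐ[μ]
        C.indicator (fun p => (‖w p‖ ^ 2 : ℂ)) := by
      filter_upwards [hscoe] with p hp
      rw [hp]
      by_cases hpC : p ∈ C
      · rw [Set.indicator_of_mem hpC, Set.indicator_of_mem hpC]
        rw [inner_self_eq_norm_sq_to_K]
        norm_num
      · rw [Set.indicator_of_notMem hpC, Set.indicator_of_notMem hpC, inner_zero_left]
    have hint : Integrable (fun p => (inner ℂ (s p) (w p) : ℂ)) μ := L2.integrable_inner s w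
    have hint2 : Integrable (C.indicator (fun p => (‖w p‖ ^ 2 : ℂ))) μ := hint.congr hptwise
    have hzero : ∫ p, C.indicator (fun q => (‖w q‖ ^ 2 : ℂ)) p ∂μ = 0 := by
      rw [← integral_congr_ae hptwise, ← MeasureTheory.L2.inner_def, hsw]
    -- go to real parts
    have hre : ∫ p, C.indicator (fun q => (‖w q‖ ^ 2 : ℝ)) p ∂μ = 0 := by
      have : C.indicator (fun q => (‖w q‖ ^ 2 : ℝ)) =
          fun p => (C.indicator (fun q => (‖w q‖ ^ 2 : ℂ)) p).re := by
        funext p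
        by_cases hpC : p ∈ C
        · simp [Set.indicator_of_mem hpC, ← Complex.ofReal_pow]
        · simp [Set.indicator_of_notMem hpC]
      have h := integral_re hint2
      simp only [RCLike.re_to_complex] at h
      rw [this, h, hzero]
      simp
    have hintre : Integrable (C.indicator (fun q => (‖w q‖ ^ 2 : ℝ))) μ := by
      have := hint2.re
      apply this.congr
      filter_upwards with p
      by_cases hpC : p ∈ C
      · simp [Set.indicator_of_mem hpC, ← Complex.ofReal_pow]
      · simp [Set.indicator_of_notMem hpC]
    have hnonneg : 0 ≤ᵐ[μ] C.indicator (fun q => (‖w q‖ ^ 2 : ℝ)) := by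
      filter_upwards with p
      exact Set.indicator_nonneg (fun q _ => sq_nonneg _) p
    have hae0 : C.indicator (fun q => (‖w q‖ ^ 2 : ℝ)) =ᵐ[μ] 0 :=
      (integral_eq_zero_iff_of_nonneg_ae hnonneg hintre).mp hre
    filter_upwards [hae0] with p hp hpC
    have hpC' : p ∈ C := hpC
    have h2 : ‖(w : M → ℂ) p‖ ^ 2 = 0 := by
      have := hp
      rw [Set.indicator_of_mem hpC'] at this
      simpa using this
    simpa using h2
  have keyN : ∀ᵐ p ∂μ, ∀ n : ℕ,
      ENNReal.ofReal (R + 1 / (n + 1)) ≤ EMetric.infEdist (f p) D → w p = 0 :=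
    ae_all_iff.mpr fun n => key (1 / (n + 1)) (by positivity)
  filter_upwards [keyN] with p hp hpmem
  rw [Set.mem_preimage, mem_cthickening_iff, not_le] at hpmem
  rcases eq_or_ne (EMetric.infEdist (f p) D) ⊤ with htop | htop
  · exact hp 0 (htop ▸ le_top)
  · have hlt : R < (EMetric.infEdist (f p) D).toReal := by
      exact (ENNReal.ofReal_lt_iff_lt_toReal hR htop).mp hpmem
    obtain ⟨n, hn⟩ := exists_nat_one_div_lt (sub_pos.2 hlt)
    refine hp n ?_
    have : R + 1 / (n + 1) ≤ (EMetric.infEdist (f p) D).toReal := by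
      push_cast at hn ⊢
      linarith
    calc ENNReal.ofReal (R + 1 / (n + 1)) ≤ ENNReal.ofReal (EMetric.infEdist (f p) D).toReal :=
          ENNReal.ofReal_le_ofReal this
      _ = EMetric.infEdist (f p) D := ENNReal.ofReal_toReal htop
end

section
/- Let M and Y be metric spaces equipped with Borel measures μ and ν, let f : M → Y be continuous, R ≥ 0 and P ≥ 0. Let V : L²(M,μ;ℂ) → L²(Y,ν;ℂ) be a continuous linear map which covers f with propagation R: for every s ∈ L²(μ) and every closed C ⊆ M with s = 0 μ-a.e. outside C, one has Vs = 0 ν-a.e. outside U_R(f(C)). Let T : L²(μ) → L²(μ) be a continuous linear map with propagation P: for every s ∈ L²(μ) and every closed C ⊆ M with s = 0 μ-a.e. outside C, one has Ts = 0 μ-a.e. outside U_P(C). Then for every u ∈ L²(ν) and every closed D ⊆ Y with u = 0 ν-a.e. outside D, one has V T V* u = 0 ν-a.e. outside U_R( f( U_P( f⁻¹( U_R(D) ) ) ) ). -/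
open MeasureTheory Metric in
/-- Support bookkeeping for the conjugated operator `V T V*`: if
`V : L²(μ) → L²(ν)` covers `f` with propagation `R` and `T` has propagation
`P`, then `V T V*` maps sections supported in a closed set `D` to sections
supported in `U_R(f(U_P(f⁻¹(U_R(D)))))`. -/
theorem stmt14 {M Y : Type*} [MetricSpace M] [MetricSpace Y]
    [MeasurableSpace M] [BorelSpace M] [MeasurableSpace Y] [BorelSpace Y]
    (μ : Measure M) (ν : Measure Y) (f : M → Y) (hf : Continuous f)
    (R P : ℝ) (hR : 0 ≤ R) (hP : 0 ≤ P)
    (V : Lp ℂ 2 μ →L[ℂ] Lp ℂ 2 ν)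
    (hV : ∀ (s : Lp ℂ 2 μ) (C : Set M), IsClosed C →
      (∀ᵐ p ∂μ, p ∉ C → s p = 0) →
      (∀ᵐ y ∂ν, y ∉ cthickening R (f '' C) → V s y = 0))
    (T : Lp ℂ 2 μ →L[ℂ] Lp ℂ 2 μ)
    (hT : ∀ (s : Lp ℂ 2 μ) (C : Set M), IsClosed C →
      (∀ᵐ p ∂μ, p ∉ C → s p = 0) →
      (∀ᵐ p ∂μ, p ∉ cthickening P C → T s p = 0))
    (u : Lp ℂ 2 ν) (D : Set Y) (hD : IsClosed D)
    (hu : ∀ᵐ y ∂ν, y ∉ D → u y = 0) :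
    ∀ᵐ y ∂ν, y ∉ cthickening R (f '' (cthickening P (f ⁻¹' (cthickening R D)))) →
      V (T ((ContinuousLinearMap.adjoint V) u)) y = 0 := by
  classical
  set g : Lp ℂ 2 μ := (ContinuousLinearMap.adjoint V) u with hg
  rcases D.eq_empty_or_nonempty with rfl | hDne
  · -- If `D = ∅` then `u = 0` and everything vanishes.
    have hu0 : u = 0 := by
      apply Lp.ext (p := (2 : ENNReal))
      filter_upwards [hu, Lp.coeFn_zero (E := ℂ) (p := (2 : ENNReal)) (μ := ν)] with y h1 h2
      rw [h2]
      exact h1 (Set.notMem_empty y)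
    have : V (T g) = 0 := by
      rw [hg, hu0]
      simp
    rw [this]
    filter_upwards [Lp.coeFn_zero (E := ℂ) (p := (2 : ENNReal)) (μ := ν)] with y h2 _
    exact h2
  -- Main case: `D` nonempty.
  -- Step 1: `g = V* u` vanishes a.e. outside `f ⁻¹' (cthickening R D)`.
  have key : ∀ᵐ p ∂μ, p ∉ f ⁻¹' (cthickening R D) → g p = 0 := by
    have main : ∀ n : ℕ, ∀ᵐ p ∂μ,
        p ∈ {x | R + 1 / (n + 1) ≤ infDist (f x) D} → g p = 0 := by
      intro n
      set ε : ℝ := 1 / (n + 1) with hε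
      have hεpos : 0 < ε := by positivity
      set C : Set M := {x | R + ε ≤ infDist (f x) D} with hC
      have hCclosed : IsClosed C :=
        isClosed_le continuous_const ((continuous_infDist_pt D).comp hf)
      have hCmeas : MeasurableSet C := hCclosed.measurableSet
      set s0 : M → ℂ := C.indicator (g : M → ℂ) with hs0
      have hmem : MemLp s0 2 μ := (Lp.memLp g).indicator hCmeas
      set s : Lp ℂ 2 μ := hmem.toLp with hs
      have hscoe : (s : M → ℂ) =ᵐ[μ] s0 := hmem.coeFn_toLp
      have hsupp : ∀ᵐ p ∂μ, p ∉ C → s p = 0 := by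
        filter_upwards [hscoe] with p hp hpC
        rw [hp, hs0, Set.indicator_of_notMem hpC]
      have hVs := hV s C hCclosed hsupp
      -- `cthickening R (f '' C)` is disjoint from `D`
      have hdisj : ∀ y ∈ D, y ∉ cthickening R (f '' C) := by
        intro y hyD hyU
        have hyT : y ∈ thickening (R + ε) (f '' C) :=
          cthickening_subset_thickening' (by linarith) (by linarith) (f '' C) hyU
        obtain ⟨z, hz, hd⟩ := mem_thickening_iff.mp hyT
        obtain ⟨x, hxC, rfl⟩ := hz
        have h2 : R + ε ≤ infDist (f x) D := hxC
        have h3 : infDist (f x) D ≤ infDist y D + dist (f x) y :=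
          infDist_le_infDist_add_dist
        have h4 : infDist y D = 0 := infDist_zero_of_mem hyD
        rw [dist_comm] at h3
        linarith
      -- `⟪u, V s⟫ = 0` since the supports are a.e. disjoint
      have hinner : (inner ℂ u (V s) : ℂ) = 0 := by
        rw [MeasureTheory.L2.inner_def]
        apply integral_eq_zero_of_ae
        filter_upwards [hu, hVs] with y h1 h2
        by_cases hy : y ∈ D
        · rw [h2 (hdisj y hy)]
          simp
        · rw [h1 hy]
          simp
      have hadj : (inner ℂ g s : ℂ) = 0 := by
        rw [hg, ContinuousLinearMap.adjoint_inner_left]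
        exact hinner
      -- `g - s` is orthogonal to `s`
      have horth : (inner ℂ (g - s) s : ℂ) = 0 := by
        rw [MeasureTheory.L2.inner_def]
        apply integral_eq_zero_of_ae
        filter_upwards [hscoe, Lp.coeFn_sub g s] with p hp hps
        rw [hps]
        by_cases hpC : p ∈ C
        · simp [Pi.sub_apply, hp, hs0, Set.indicator_of_mem hpC]
        · simp [hp, hs0, Set.indicator_of_notMem hpC]
      have hss : s = 0 := by
        rw [inner_sub_left, hadj, zero_sub, neg_eq_zero] at horth
        exact inner_self_eq_zero.mp horth
      have hzero : s0 =ᵐ[μ] 0 := by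
        rw [hss] at hscoe
        exact hscoe.symm.trans (Lp.coeFn_zero ℂ 2 μ)
      filter_upwards [hzero] with p hp hpC
      have : s0 p = g p := Set.indicator_of_mem hpC _
      rw [← this, hp]
      rfl
    rw [← ae_all_iff] at main
    filter_upwards [main] with p hp hpD
    have hlt : R < infDist (f p) D := by
      have h1 : ENNReal.ofReal R < EMetric.infEdist (f p) D := by
        by_contra h
        exact hpD (mem_cthickening_iff.mpr (not_lt.mp h))
      have h2 := (ENNReal.toReal_lt_toReal ENNReal.ofReal_ne_top
        (infEdist_ne_top hDne)).mpr h1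
      rwa [ENNReal.toReal_ofReal hR] at h2
    obtain ⟨n, hn⟩ := exists_nat_one_div_lt (sub_pos.mpr hlt)
    refine hp n ?_
    have : (1 : ℝ) / (n + 1) < infDist (f p) D - R := hn
    show R + 1 / ((n : ℝ) + 1) ≤ infDist (f p) D
    linarith
  -- Step 2: apply the propagation of `T`
  have hA : IsClosed (f ⁻¹' (cthickening R D)) :=
    (isClosed_cthickening).preimage hf
  have hTg := hT g (f ⁻¹' (cthickening R D)) hA key
  -- Step 3: apply the covering property of `V`
  exact hV (T g) (cthickening P (f ⁻¹' (cthickening R D))) isClosed_cthickening hTg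
end

section
/- Let M and Y be metric spaces equipped with Borel measures μ and ν, let f : M → Y be continuous and R ≥ 0, and let V : L²(M,μ;ℂ) → L²(Y,ν;ℂ) be a continuous linear map which covers f with propagation R: for every s ∈ L²(μ) and every closed C ⊆ M with s = 0 μ-a.e. outside C, one has Vs = 0 ν-a.e. outside U_R(f(C)). Let T₁, T₂ : L²(μ) → L²(μ) be continuous linear maps and D ⊆ Y a closed set, and assume T₁ s = T₂ s for every s ∈ L²(μ) with s = 0 μ-a.e. outside f⁻¹(U_R(D)). Then for every u ∈ L²(ν) with u = 0 ν-a.e. outside D one has V T₁ V* u = V T₂ V* u. -/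
open MeasureTheory Metric in
/-- Localization: if `V : L²(μ) → L²(ν)` covers `f` with propagation `R` and
the operators `T₁, T₂` agree on all sections supported in `f⁻¹(U_R(D))`, then
`V T₁ V* u = V T₂ V* u` for every `u` supported in the closed set `D`. -/
theorem stmt15 {M Y : Type*} [MetricSpace M] [MetricSpace Y]
    [MeasurableSpace M] [BorelSpace M] [MeasurableSpace Y] [BorelSpace Y]
    (μ : Measure M) (ν : Measure Y) (f : M → Y) (hf : Continuous f)
    (R : ℝ) (hR : 0 ≤ R)
    (V : Lp ℂ 2 μ →L[ℂ] Lp ℂ 2 ν)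
    (hV : ∀ (s : Lp ℂ 2 μ) (C : Set M), IsClosed C →
      (∀ᵐ p ∂μ, p ∉ C → s p = 0) →
      (∀ᵐ y ∂ν, y ∉ cthickening R (f '' C) → V s y = 0))
    (T₁ T₂ : Lp ℂ 2 μ →L[ℂ] Lp ℂ 2 μ)
    (D : Set Y) (hD : IsClosed D)
    (hT : ∀ s : Lp ℂ 2 μ,
      (∀ᵐ p ∂μ, p ∉ f ⁻¹' (cthickening R D) → s p = 0) → T₁ s = T₂ s)
    (u : Lp ℂ 2 ν) (hu : ∀ᵐ y ∂ν, y ∉ D → u y = 0) :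
    V (T₁ ((ContinuousLinearMap.adjoint V) u)) =
      V (T₂ ((ContinuousLinearMap.adjoint V) u)) := by
  classical
  rcases D.eq_empty_or_nonempty with hDe | hDne
  · -- `D = ∅` : then `u = 0`.
    have hu0 : u = 0 := by
      ext1
      filter_upwards [hu, Lp.coeFn_zero ℂ 2 ν] with y hy h0
      rw [h0]
      exact hy (by simp [hDe])
    simp [hu0]
  set s : Lp ℂ 2 μ := (ContinuousLinearMap.adjoint V) u with hs
  have key : ∀ᵐ p ∂μ, p ∉ f ⁻¹' (cthickening R D) → s p = 0 := by
    have hzero : ∀ n : ℕ,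
        (Set.indicator {x : M | R + 1/((n:ℝ)+1) ≤ infDist (f x) D} (s : M → ℂ)) =ᵐ[μ] 0 := by
      intro n
      set δ : ℝ := 1/((n:ℝ)+1) with hδ
      have hδpos : 0 < δ := by positivity
      set K : Set M := {x : M | R + δ ≤ infDist (f x) D} with hK
      have hKclosed : IsClosed K :=
        IsClosed.preimage ((continuous_infDist_pt D).comp hf) isClosed_Ici
      have hmem : MemLp (K.indicator (s : M → ℂ)) 2 μ :=
        (Lp.memLp s).indicator hKclosed.measurableSet
      set t : Lp ℂ 2 μ := hmem.toLp _ with ht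
      have hts : (t : M → ℂ) =ᵐ[μ] K.indicator (s : M → ℂ) := hmem.coeFn_toLp
      have hsupp : ∀ᵐ p ∂μ, p ∉ K → t p = 0 := by
        filter_upwards [hts] with p hp hpK
        rw [hp, Set.indicator_of_notMem hpK]
      have hVt := hV t K hKclosed hsupp
      have hdisj : ∀ y ∈ D, y ∉ cthickening R (f '' K) := by
        intro y hy hyc
        rw [mem_cthickening_iff] at hyc
        have hge : ENNReal.ofReal (R + δ) ≤ infEDist y (f '' K) := by
          rw [le_infEDist]
          rintro z ⟨x, hxK, rfl⟩
          rw [edist_dist]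
          apply ENNReal.ofReal_le_ofReal
          calc R + δ ≤ infDist (f x) D := hxK
            _ ≤ dist (f x) y := infDist_le_dist_of_mem hy
            _ = dist y (f x) := dist_comm _ _
        have hle := hge.trans hyc
        rw [ENNReal.ofReal_le_ofReal_iff hR] at hle
        linarith
      have hinner0 : (inner ℂ (V t) u : ℂ) = 0 := by
        rw [L2.inner_def]
        apply integral_eq_zero_of_ae
        filter_upwards [hVt, hu] with y h1 h2
        by_cases hyD : y ∈ D
        · rw [h1 (hdisj y hyD), inner_zero_left]; rfl
        · rw [h2 hyD, inner_zero_right]; rfl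
      have hts' : (inner ℂ t s : ℂ) = inner ℂ t t := by
        rw [L2.inner_def, L2.inner_def]
        apply integral_congr_ae
        filter_upwards [hts] with p hp
        by_cases hpK : p ∈ K
        · rw [hp, Set.indicator_of_mem hpK]
        · rw [hp, Set.indicator_of_notMem hpK, inner_zero_left, inner_zero_left]
      have htt0 : (inner ℂ t t : ℂ) = 0 := by
        rw [← hts', hs, ContinuousLinearMap.adjoint_inner_right]
        exact hinner0
      have ht0 : t = 0 := inner_self_eq_zero.mp htt0
      calc Set.indicator K (s : M → ℂ) =ᵐ[μ] (t : M → ℂ) := hts.symm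
        _ = ((0 : Lp ℂ 2 μ) : M → ℂ) := by rw [ht0]
        _ =ᵐ[μ] 0 := Lp.coeFn_zero ℂ 2 μ
    have hall : ∀ᵐ p ∂μ, ∀ n : ℕ,
        Set.indicator {x : M | R + 1/((n:ℝ)+1) ≤ infDist (f x) D} (s : M → ℂ) p = 0 :=
      ae_all_iff.mpr hzero
    filter_upwards [hall] with p hp hpC
    have h1 : R < infDist (f p) D := by
      have h2 : ENNReal.ofReal R < infEDist (f p) D :=
        not_le.mp (fun h => hpC (mem_cthickening_iff.mpr h))
      have h3 := ENNReal.toReal_lt_toReal ENNReal.ofReal_ne_top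
        (Metric.infEdist_ne_top hDne) |>.mpr h2
      rwa [ENNReal.toReal_ofReal hR] at h3
    obtain ⟨n, hn⟩ := exists_nat_one_div_lt (show 0 < infDist (f p) D - R by linarith)
    have hmem : p ∈ {x : M | R + 1/((n:ℝ)+1) ≤ infDist (f x) D} := by
      simp only [Set.mem_setOf_eq]
      linarith
    have := hp n
    rwa [Set.indicator_of_mem hmem] at this
  rw [hT s key]
end
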